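/- (Lemma 2.1(2)) For every natural number n ≥ 1, all reals 0 < q < p ≤ 1 and every x ≥ 0, applying the (p,q)-Bleimann–Butzer–Hahn operator to the function t ↦ t/(1+t) gives L_n^{p,q}(t/(1+t); x) = p²q · ([n]_{p,q}/[n+1]_{p,q}) · x/(1+x). -/

import Mathlib

open Finset Filter
open scoped Classical

noncomputable section

/-- The `(p,q)`-integer `[n]_{p,q} = (p^n - q^n)/(p - q)`. -/
def pqInt (p q : ℝ) (n : ℕ) : ℝ := (p ^ n - q ^ n) / (p - q)

/-- The `(p,q)`-factorial. -/
def pqFact (p q : ℝ) : ℕ → ℝ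
  | 0 => 1
  | n + 1 => pqFact p q n * pqInt p q (n + 1)

/-- The `(p,q)`-binomial coefficient. -/
def pqBinom (p q : ℝ) (n k : ℕ) : ℝ :=
  pqFact p q n / (pqFact p q k * pqFact p q (n - k))

/-- `ℓ_n^{p,q}(x) = ∏_{s=0}^{n-1} (p^s + q^s x)`. -/
def pqEll (p q : ℝ) (n : ℕ) (x : ℝ) : ℝ :=
  ∏ s ∈ Finset.range n, (p ^ s + q ^ s * x)

/-- The node `p^{n-k+1}[k]_{p,q} / ([n-k+1]_{p,q} q^k)`. -/
def pqNode (p q : ℝ) (n k : ℕ) : ℝ :=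
  p ^ (n - k + 1) * pqInt p q k / (pqInt p q (n - k + 1) * q ^ k)

/-- The `(p,q)`-Bleimann–Butzer–Hahn operator. -/
def bbh (p q : ℝ) (n : ℕ) (f : ℝ → ℝ) (x : ℝ) : ℝ :=
  (p * q / pqEll p q n x) *
    ∑ k ∈ Finset.range (n + 1),
      f (pqNode p q n k) * p ^ ((n - k) * (n - k - 1) / 2) *
        q ^ (k * (k - 1) / 2) * pqBinom p q n k * x ^ k

/-- `δ_n(x)` from Theorem 3.1. -/
def pqDelta (p q : ℝ) (n : ℕ) (x : ℝ) : ℝ :=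
  (x / (1 + x)) ^ 2 *
      (p ^ 2 * q ^ 3 * pqInt p q n * pqInt p q (n - 1) / (pqInt p q (n + 1)) ^ 2 *
          ((1 + x) / (p + q * x)) -
        2 * p * q * pqInt p q n / pqInt p q (n + 1) + 1) +
    p ^ (n + 2) * q * pqInt p q n / (pqInt p q (n + 1)) ^ 2 * (x / (1 + x))

/-- Statistical convergence of a real sequence. -/
def StatConv (a : ℕ → ℝ) (l : ℝ) : Prop :=
  ∀ ε > (0 : ℝ), Tendsto (fun n : ℕ =>
    (((Finset.range (n + 1)).filter (fun k => ε ≤ |a k - l|)).card : ℝ) / n)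
    atTop (nhds 0)

/-- A modulus of continuity. -/
def IsModulus (ω : ℝ → ℝ) : Prop :=
  (∀ δ, 0 ≤ δ → 0 ≤ ω δ) ∧
  (∀ δ₁ δ₂, 0 ≤ δ₁ → δ₁ ≤ δ₂ → ω δ₁ ≤ ω δ₂) ∧
  (∀ δ₁ δ₂, 0 ≤ δ₁ → 0 ≤ δ₂ → ω (δ₁ + δ₂) ≤ ω δ₁ + ω δ₂) ∧
  Tendsto ω (nhdsWithin 0 (Set.Ioi 0)) (nhds 0)

/-- Membership in the class `H_ω`. -/
def MemHomega (ω f : ℝ → ℝ) : Prop :=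
  ∀ x y : ℝ, 0 ≤ x → 0 ≤ y → |f x - f y| ≤ ω |x / (1 + x) - y / (1 + y)|

/-- The modulus `ω̃(f; δ)`. -/
def omegaTilde (f : ℝ → ℝ) (δ : ℝ) : ℝ :=
  sSup {d | ∃ t x : ℝ, 0 ≤ t ∧ 0 ≤ x ∧ |t / (1 + t) - x / (1 + x)| ≤ δ ∧ d = |f t - f x|}

/-- The bivariate `(p,q)`-Bleimann–Butzer–Hahn operator. -/
def bbh2 (p₁ p₂ q₁ q₂ : ℝ) (n₁ n₂ : ℕ) (f : ℝ → ℝ → ℝ) (x y : ℝ) : ℝ :=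
  (p₁ * p₂ * q₁ * q₂ / (pqEll p₁ q₁ n₁ x * pqEll p₂ q₂ n₂ y)) *
    ∑ k₁ ∈ Finset.range (n₁ + 1), ∑ k₂ ∈ Finset.range (n₂ + 1),
      f (pqNode p₁ q₁ n₁ k₁) (pqNode p₂ q₂ n₂ k₂) *
        p₁ ^ ((n₁ - k₁) * (n₁ - k₁ - 1) / 2) * q₁ ^ (k₁ * (k₁ - 1) / 2) *
        p₂ ^ ((n₂ - k₂) * (n₂ - k₂ - 1) / 2) * q₂ ^ (k₂ * (k₂ - 1) / 2) *
        pqBinom p₁ q₁ n₁ k₁ * pqBinom p₂ q₂ n₂ k₂ * x ^ k₁ * y ^ k₂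

/-- Statistical convergence of a double real sequence (Pringsheim sense). -/
def StatConv2 (a : ℕ → ℕ → ℝ) (l : ℝ) : Prop :=
  ∀ ε > (0 : ℝ), Tendsto (fun N : ℕ × ℕ =>
    ((((Finset.range (N.1 + 1)) ×ˢ (Finset.range (N.2 + 1))).filter
        (fun jk => ε ≤ |a jk.1 jk.2 - l|)).card : ℝ) / (N.1 * N.2))
    atTop (nhds 0)

/-- A bivariate modulus of continuity. -/
def IsModulus2 (ω : ℝ → ℝ → ℝ) : Prop :=
  (∀ a b, 0 ≤ a → 0 ≤ b → 0 ≤ ω a b) ∧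
  (∀ a a' b, 0 ≤ a → a ≤ a' → 0 ≤ b → ω a b ≤ ω a' b) ∧
  (∀ a b b', 0 ≤ a → 0 ≤ b → b ≤ b' → ω a b ≤ ω a b') ∧
  (∀ a a' b, 0 ≤ a → 0 ≤ a' → 0 ≤ b → ω (a + a') b ≤ ω a b + ω a' b) ∧
  (∀ a b b', 0 ≤ a → 0 ≤ b → 0 ≤ b' → ω a (b + b') ≤ ω a b + ω a b') ∧
  Tendsto (fun d : ℝ × ℝ => ω d.1 d.2)
    (nhdsWithin (0, 0) (Set.Ioi 0 ×ˢ Set.Ioi 0)) (nhds 0)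

/-- Membership in the class `H_{ω₂}`. -/
def MemHomega2 (ω g : ℝ → ℝ → ℝ) : Prop :=
  ∀ u₁ v₁ u₂ v₂ : ℝ, 0 ≤ u₁ → 0 ≤ v₁ → 0 ≤ u₂ → 0 ≤ v₂ →
    |g u₁ v₁ - g u₂ v₂| ≤
      ω |u₁ / (1 + u₁) - u₂ / (1 + u₂)| |v₁ / (1 + v₁) - v₂ / (1 + v₂)|

/-- The bivariate modulus `ω̃(g; δ₁, δ₂)`. -/
def omegaTilde2 (g : ℝ → ℝ → ℝ) (δ₁ δ₂ : ℝ) : ℝ :=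
  sSup {d | ∃ t s x y : ℝ, 0 ≤ t ∧ 0 ≤ s ∧ 0 ≤ x ∧ 0 ≤ y ∧
    |t / (1 + t) - x / (1 + x)| ≤ δ₁ ∧ |s / (1 + s) - y / (1 + y)| ≤ δ₂ ∧
    d = |g t s - g x y|}

variable {p q : ℝ}

lemma pqInt_pos (hq : 0 < q) (hqp : q < p) {k : ℕ} (hk : k ≠ 0) : 0 < pqInt p q k :=
  div_pos (sub_pos.2 (pow_lt_pow_left₀ hqp hq.le hk)) (sub_pos.2 hqp)

lemma pqFact_pos (hq : 0 < q) (hqp : q < p) (n : ℕ) : 0 < pqFact p q n := by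
  induction n with
  | zero => norm_num [pqFact]
  | succ n ih => exact mul_pos ih (pqInt_pos hq hqp n.succ_ne_zero)

lemma pqInt_add (hqp : q ≠ p) (a b : ℕ) :
    pqInt p q (a + b) = p ^ a * pqInt p q b + q ^ b * pqInt p q a := by
  unfold pqInt
  have h : p - q ≠ 0 := sub_ne_zero.2 hqp.symm
  field_simp
  ring

lemma pqBinom_self (hq : 0 < q) (hqp : q < p) (m : ℕ) : pqBinom p q m m = 1 := by
  unfold pqBinom
  rw [Nat.sub_self]
  simp [pqFact, (pqFact_pos hq hqp m).ne']

lemma pqBinom_zero (hq : 0 < q) (hqp : q < p) (m : ℕ) : pqBinom p q m 0 = 1 := by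
  unfold pqBinom
  simp [pqFact, (pqFact_pos hq hqp m).ne']

lemma pqBinom_pascal (hq : 0 < q) (hqp : q < p) {m k : ℕ} (hk : k < m) :
    pqBinom p q (m + 1) (k + 1) =
      q ^ (k + 1) * pqBinom p q m (k + 1) + p ^ (m - k) * pqBinom p q m k := by
  have hab : (m : ℕ) + 1 = (m - k) + (k + 1) := by omega
  have hint := pqInt_add (hqp.ne) (m - k) (k + 1)
  have hmk : m - (k + 1) + 1 = m - k := by omega
  have h1 : pqFact p q (m + 1) = pqFact p q m * pqInt p q (m + 1) := rfl
  have h2 : pqFact p q (k + 1) = pqFact p q k * pqInt p q (k + 1) := rfl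
  have h3 : pqFact p q (m - k) = pqFact p q (m - (k + 1)) * pqInt p q (m - k) := by
    rw [← hmk]; rfl
  unfold pqBinom
  rw [show (m + 1) - (k + 1) = m - k from by omega, h1, h2]
  rw [← hab] at hint
  rw [hint, h3]
  have f1 := (pqFact_pos hq hqp m).ne'
  have f2 := (pqFact_pos hq hqp k).ne'
  have f3 := (pqFact_pos hq hqp (m - (k+1))).ne'
  have i1 := (pqInt_pos hq hqp (k.succ_ne_zero)).ne'
  have i2 := (pqInt_pos hq hqp (show m - k ≠ 0 by omega)).ne'
  field_simp
  ring

lemma pqBinom_mul_pqInt (hq : 0 < q) (hqp : q < p) {n k : ℕ} (hk : k < n) :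
    pqBinom p q n (k + 1) * pqInt p q (k + 1) = pqInt p q n * pqBinom p q (n - 1) k := by
  have h1 : pqFact p q n = pqFact p q (n - 1) * pqInt p q n := by
    obtain ⟨m, rfl⟩ : ∃ m, n = m + 1 := ⟨n - 1, by omega⟩
    simp [pqFact]
  have h2 : pqFact p q (k + 1) = pqFact p q k * pqInt p q (k + 1) := rfl
  unfold pqBinom
  rw [h1, h2, show n - (k + 1) = (n - 1) - k by omega]
  have f2 := (pqFact_pos hq hqp k).ne'
  have f3 := (pqFact_pos hq hqp ((n-1) - k)).ne'
  have f4 := (pqFact_pos hq hqp (n-1)).ne'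
  have i1 := (pqInt_pos hq hqp (k.succ_ne_zero)).ne'
  field_simp

lemma tri (d : ℕ) : (d + 1) * (d + 1 - 1) / 2 = d * (d - 1) / 2 + d := by
  have h1 := Nat.choose_two_right (d + 1)
  have h2 := Nat.choose_two_right d
  have h3 : (d + 1).choose 2 = d.choose 1 + d.choose 2 := Nat.choose_succ_succ d 1
  simp only [Nat.choose_one_right] at h3
  simp only [Nat.add_sub_cancel] at h1 ⊢
  omega

lemma gauss (hq : 0 < q) (hqp : q < p) :
    ∀ (m : ℕ) (a b : ℝ),
      (∑ k ∈ range (m + 1),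
        p ^ ((m - k) * (m - k - 1) / 2) * q ^ (k * (k - 1) / 2) * pqBinom p q m k *
          a ^ (m - k) * b ^ k) = ∏ s ∈ range m, (p ^ s * a + q ^ s * b) := by
  intro m
  induction m with
  | zero => intro a b; simp [pqBinom, pqFact]
  | succ m ih =>
    intro a b
    have key : (∑ k ∈ range (m + 1 + 1),
        p ^ ((m + 1 - k) * (m + 1 - k - 1) / 2) * q ^ (k * (k - 1) / 2) *
          pqBinom p q (m + 1) k * a ^ (m + 1 - k) * b ^ k) =
        (a + b) * ∑ k ∈ range (m + 1),
          p ^ ((m - k) * (m - k - 1) / 2) * q ^ (k * (k - 1) / 2) * pqBinom p q m k *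
            (p * a) ^ (m - k) * (q * b) ^ k := by
      set U : ℕ → ℝ := fun k =>
        p ^ ((m - k) * (m - k - 1) / 2) * q ^ (k * (k - 1) / 2) * pqBinom p q m k *
          (p * a) ^ (m - k) * (q * b) ^ k with hU
      rw [Finset.sum_range_succ']
      rw [Finset.sum_range_succ]
      have hsplit : ∀ j ∈ range m,
          p ^ ((m + 1 - (j + 1)) * (m + 1 - (j + 1) - 1) / 2) * q ^ ((j + 1) * (j + 1 - 1) / 2) *
            pqBinom p q (m + 1) (j + 1) * a ^ (m + 1 - (j + 1)) * b ^ (j + 1) =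
          b * U j + a * U (j + 1) := by
        intro j hj
        have hjm : j < m := mem_range.1 hj
        rw [pqBinom_pascal hq hqp hjm]
        obtain ⟨d, rfl⟩ : ∃ d, m = j + 1 + d := ⟨m - j - 1, by omega⟩
        simp only [hU]
        simp only [show j + 1 + d + 1 - (j + 1) = d + 1 from by omega,
          show j + 1 + d - j = d + 1 from by omega,
          show j + 1 + d - (j + 1) = d from by omega]
        rw [show (d + 1) * (d + 1 - 1) / 2 = d * (d - 1) / 2 + d from tri d,
          show (j + 1) * (j + 1 - 1) / 2 = j * (j - 1) / 2 + j from tri j]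
        simp only [pow_add, mul_pow]
        ring
      rw [Finset.sum_congr rfl hsplit, Finset.sum_add_distrib]
      have hlast : p ^ ((m + 1 - (m + 1)) * (m + 1 - (m + 1) - 1) / 2) *
          q ^ ((m + 1) * (m + 1 - 1) / 2) * pqBinom p q (m + 1) (m + 1) *
          a ^ (m + 1 - (m + 1)) * b ^ (m + 1) = b * U m := by
        simp only [hU, Nat.sub_self, pqBinom_self hq hqp,
          show m - m = 0 from by omega]
        rw [show (m + 1) * (m + 1 - 1) / 2 = m * (m - 1) / 2 + m from tri m]
        simp only [pow_add, mul_pow, pow_zero]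
        ring
      have hzero : p ^ ((m + 1 - 0) * (m + 1 - 0 - 1) / 2) * q ^ (0 * (0 - 1) / 2) *
          pqBinom p q (m + 1) 0 * a ^ (m + 1 - 0) * b ^ 0 = a * U 0 := by
        simp only [hU, Nat.sub_zero, pqBinom_zero hq hqp]
        rw [show (m + 1) * (m + 1 - 1) / 2 = m * (m - 1) / 2 + m from tri m]
        simp only [pow_add, mul_pow, pow_zero]
        ring
      rw [hlast, hzero]
      rw [add_mul, Finset.mul_sum, Finset.mul_sum]
      rw [Finset.sum_range_succ' (fun k => a * U k) m, Finset.sum_range_succ (fun k => b * U k) m]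
      ring
    rw [key, ih (p * a) (q * b)]
    rw [Finset.prod_range_succ']
    simp only [pow_zero, one_mul, pow_succ']
    have : ∀ s, p ^ s * (p * a) + q ^ s * (q * b) = p * p ^ s * a + q * q ^ s * b := by
      intro s; ring
    rw [Finset.prod_congr rfl fun s _ => this s]
    ring


lemma pqInt_nonneg (hq : 0 < q) (hqp : q < p) (k : ℕ) : 0 ≤ pqInt p q k := by
  cases k with
  | zero => simp [pqInt]
  | succ k => exact (pqInt_pos hq hqp k.succ_ne_zero).le

lemma node_val (hq : 0 < q) (hqp : q < p) {n k : ℕ} (hk : k ≤ n) (hkpos : 1 ≤ k) :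
    pqNode p q n k / (1 + pqNode p q n k) =
      p ^ (n - k + 1) * pqInt p q k / pqInt p q (n + 1) := by
  have hp0 : 0 < p := hq.trans hqp
  set N : ℝ := p ^ (n - k + 1) * pqInt p q k with hN
  set D : ℝ := pqInt p q (n - k + 1) * q ^ k with hD
  have hDpos : 0 < D := mul_pos (pqInt_pos hq hqp (n - k).succ_ne_zero) (pow_pos hq k)
  have hNpos : 0 ≤ N := mul_nonneg (pow_pos hp0 _).le (pqInt_nonneg hq hqp k)
  have hsum : pqInt p q (n + 1) = N + D := by
    have h := pqInt_add (hqp.ne) (n - k + 1) k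
    rw [show n - k + 1 + k = n + 1 from by omega] at h
    rw [h, hN, hD]; ring
  have hn1 : pqInt p q (n + 1) ≠ 0 := by rw [hsum]; positivity
  have hnode : pqNode p q n k = N / D := rfl
  rw [hnode, hsum]
  rw [show 1 + N / D = (N + D) / D from by field_simp; ring]
  rw [div_div_div_cancel_right₀]
  · exact hDpos.ne'

/-- Lemma 2.1(2). -/
theorem bbh_first_moment (n : ℕ) (hn : 1 ≤ n) (p q x : ℝ)
    (hq : 0 < q) (hqp : q < p) (hp : p ≤ 1) (hx : 0 ≤ x) :
    bbh p q n (fun t => t / (1 + t)) x =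
      p ^ 2 * q * (pqInt p q n / pqInt p q (n + 1)) * (x / (1 + x)) := by
  have hp0 : 0 < p := hq.trans hqp
  have h1x : (0 : ℝ) < 1 + x := by linarith
  obtain ⟨m, rfl⟩ : ∃ m, n = m + 1 := ⟨n - 1, by omega⟩
  have hInt2 : pqInt p q (m + 1 + 1) ≠ 0 := (pqInt_pos hq hqp (m + 1).succ_ne_zero).ne'
  have hInt1 : 0 < pqInt p q (m + 1) := pqInt_pos hq hqp m.succ_ne_zero
  unfold bbh
  rw [Finset.sum_range_succ']
  have hzero : (fun t => t / (1 + t)) (pqNode p q (m + 1) 0) *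
      p ^ ((m + 1 - 0) * (m + 1 - 0 - 1) / 2) * q ^ (0 * (0 - 1) / 2) *
      pqBinom p q (m + 1) 0 * x ^ 0 = 0 := by
    simp [pqNode, pqInt]
  rw [hzero, add_zero]
  have hterm : ∀ j ∈ range (m + 1),
      (fun t => t / (1 + t)) (pqNode p q (m + 1) (j + 1)) *
        p ^ ((m + 1 - (j + 1)) * (m + 1 - (j + 1) - 1) / 2) *
        q ^ ((j + 1) * (j + 1 - 1) / 2) * pqBinom p q (m + 1) (j + 1) * x ^ (j + 1) =
      (p * x * pqInt p q (m + 1) / pqInt p q (m + 1 + 1)) *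
        (p ^ ((m - j) * (m - j - 1) / 2) * q ^ (j * (j - 1) / 2) * pqBinom p q m j *
          p ^ (m - j) * (q * x) ^ j) := by
    intro j hj
    have hjm : j < m + 1 := mem_range.1 hj
    simp only
    rw [node_val hq hqp (by omega : j + 1 ≤ m + 1) (by omega)]
    have hbi := pqBinom_mul_pqInt hq hqp hjm
    simp only [Nat.add_sub_cancel] at hbi
    obtain ⟨d, rfl⟩ : ∃ d, m = j + d := ⟨m - j, by omega⟩
    simp only [show j + d + 1 - (j + 1) = d from by omega,
      show j + d + 1 - (j + 1) + 1 = d + 1 from by omega,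
      show j + d - j = d from by omega]
    rw [show (j + 1) * (j + 1 - 1) / 2 = j * (j - 1) / 2 + j from tri j]
    rw [div_mul_eq_mul_div, div_mul_eq_mul_div, div_mul_eq_mul_div,
      div_mul_eq_mul_div, div_mul_eq_mul_div]
    rw [div_eq_div_iff hInt2 hInt2]
    simp only [pow_add, mul_pow, pow_succ]
    linear_combination (p ^ (d * (d - 1) / 2) * q ^ (j * (j - 1) / 2) * q ^ j * x ^ j * x *
      p ^ d * p * pqInt p q (j + d + 1 + 1)) * hbi
  rw [Finset.sum_congr rfl hterm, ← Finset.mul_sum, gauss hq hqp m p (q * x)]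
  have hEll : pqEll p q (m + 1) x = (∏ s ∈ range m, (p ^ s * p + q ^ s * (q * x))) * (1 + x) := by
    unfold pqEll
    rw [Finset.prod_range_succ']
    simp only [pow_zero, one_mul, pow_succ]
    congr 1
    exact Finset.prod_congr rfl fun s _ => by ring
  have hPpos : 0 < ∏ s ∈ range m, (p ^ s * p + q ^ s * (q * x)) := by
    apply Finset.prod_pos
    intro s _
    have : 0 < p ^ s * p := mul_pos (pow_pos hp0 s) hp0
    have h2 : 0 ≤ q ^ s * (q * x) := by positivity
    linarith
  rw [hEll]
  field_simp
  ring
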